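/- Let D = 1 and A ≥ 2. For any positive integer n, the delay of the NAF representation of n differs from the minimum delay over all representations of n over {-1,0,1} (of the same length) by at most 1. -/
import Mathlib

noncomputable def T (D A : ℝ) (d : ℕ → ℤ) : ℕ → ℝ
  | 0 => if d 0 = 0 then 0 else (((d 0).natAbs : ℝ) - 1) * A
  | i + 1 =>
      if d (i + 1) = 0 then T D A d i
      else if ∀ j < i + 1, d j = 0 then
        ((i : ℝ) + 1) * D + (((d (i + 1)).natAbs : ℝ) - 1) * A
      else max (T D A d i) (((i : ℝ) + 1) * D) + ((d (i + 1)).natAbs : ℝ) * A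

noncomputable def delta (A : ℝ) (d : ℕ → ℤ) : ℕ → ℝ
  | 0 => 0
  | i + 1 =>
      if d (i + 1) = 0 then delta A d i - 1
      else if ∀ j < i + 1, d j = 0 then 0
      else max (delta A d i + (A - 1)) A

def val (d : ℕ → ℤ) (lam : ℕ) : ℤ := ∑ i ∈ Finset.range (lam + 1), d i * 2 ^ i

lemma myValSucc (d : ℕ → ℤ) (i : ℕ) : val d (i+1) = val d i + d (i+1) * 2^(i+1) :=
  Finset.sum_range_succ _ _

lemma myValAbs (d : ℕ → ℤ) (hd : ∀ i, d i = -1 ∨ d i = 0 ∨ d i = 1) (i : ℕ) :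
    |val d i| < 2^(i+1) := by
  induction i with
  | zero =>
    simp only [val, Finset.sum_range_one, pow_zero, mul_one, pow_one]
    rcases hd 0 with h|h|h <;> simp [h]
  | succ n ih =>
    rw [myValSucc]
    have h2 : (0:ℤ) < 2^(n+1) := by positivity
    have hp : (2:ℤ)^(n+1+1) = 2 * 2^(n+1) := by ring
    rw [abs_lt] at ih ⊢
    rcases hd (n+1) with h|h|h <;> rw [h] <;> constructor <;> nlinarith

lemma myValZero (d : ℕ → ℤ) (hd : ∀ i, d i = -1 ∨ d i = 0 ∨ d i = 1) (i : ℕ)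
    (h : val d i = 0) : ∀ j < i+1, d j = 0 := by
  induction i with
  | zero =>
    intro j hj
    interval_cases j
    simpa [val] using h
  | succ n ih =>
    rw [myValSucc] at h
    have hb := myValAbs d hd n
    rw [abs_lt] at hb
    have h2 : (0:ℤ) < 2^(n+1) := by positivity
    have hdz : d (n+1) = 0 := by
      rcases hd (n+1) with hh|hh|hh <;> rw [hh] at h <;> first | rfl | nlinarith
    rw [hdz] at h; simp at h
    intro j hj
    rcases Nat.lt_succ_iff_lt_or_eq.mp hj with hj'|hj'
    · exact ih h j hj'
    · rw [hj']; exact hdz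

lemma myValAllZero (d : ℕ → ℤ) (i : ℕ) (h : ∀ j < i+1, d j = 0) : val d i = 0 :=
  Finset.sum_eq_zero (fun j hj => by rw [h j (Finset.mem_range.mp hj)]; ring)

lemma deltaSuccZero (A : ℝ) (d : ℕ → ℤ) (i : ℕ) (h : d (i+1) = 0) :
    delta A d (i+1) = delta A d i - 1 := by simp [delta, h]

lemma deltaSuccFirst (A : ℝ) (d : ℕ → ℤ) (i : ℕ) (h : d (i+1) ≠ 0)
    (h2 : ∀ j < i+1, d j = 0) : delta A d (i+1) = 0 := by
  simp only [delta, if_neg h, if_pos h2]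

lemma deltaSuccMax (A : ℝ) (d : ℕ → ℤ) (i : ℕ) (h : d (i+1) ≠ 0)
    (h2 : ¬ ∀ j < i+1, d j = 0) : delta A d (i+1) = max (delta A d i + (A-1)) A := by
  simp only [delta, if_neg h, if_neg h2]

lemma deltaZero (A : ℝ) (d : ℕ → ℤ) : delta A d 0 = 0 := rfl

/-- For D = 1 and A ≥ 2, the delay of the NAF representation of n exceeds
the delay of any {-1,0,1}-representation of n of the same length by at
most 1. -/
theorem stmt19 (A : ℝ) (hA : 2 ≤ A) (n lam : ℕ) (hn : 0 < n)
    (dn d : ℕ → ℤ)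
    (hdn : ∀ i, dn i = -1 ∨ dn i = 0 ∨ dn i = 1)
    (hnaf : ∀ i, dn i * dn (i + 1) = 0)
    (hdnhigh : ∀ i, lam < i → dn i = 0)
    (hdnval : val dn lam = (n : ℤ))
    (hd : ∀ i, d i = -1 ∨ d i = 0 ∨ d i = 1)
    (hdhigh : ∀ i, lam < i → d i = 0)
    (hdval : val d lam = (n : ℤ)) :
    delta A dn lam ≤ delta A d lam + 1 := by
  have hDs : ∀ i, val d (i+1) - val dn (i+1)
      = (val d i - val dn i) + (d (i+1) - dn (i+1)) * 2^(i+1) := by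
    intro i; rw [myValSucc, myValSucc]; ring
  have hdvd : ∀ k i, i + k = lam → (2:ℤ)^(i+1) ∣ (val d i - val dn i) := by
    intro k
    induction k with
    | zero =>
      intro i hik
      have hil : i = lam := by omega
      subst hil
      rw [hdval, hdnval]; simp
    | succ m ihm =>
      intro i hik
      have h1 := ihm (i+1) (by omega)
      have h2 : (2:ℤ)^(i+1) ∣ (val d (i+1) - val dn (i+1)) :=
        dvd_trans (pow_dvd_pow 2 (by omega)) h1
      have h3 : (2:ℤ)^(i+1) ∣ (d (i+1) - dn (i+1)) * 2^(i+1) := dvd_mul_left _ _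
      have h4 : val d i - val dn i
          = (val d (i+1) - val dn (i+1)) - (d (i+1) - dn (i+1)) * 2^(i+1) := by
        rw [hDs i]; ring
      rw [h4]; exact dvd_sub h2 h3
  have hcc : ∀ i, i ≤ lam → (val d i - val dn i = 0 ∨ val d i - val dn i = 2^(i+1)
      ∨ val d i - val dn i = -2^(i+1)) := by
    intro i hi
    obtain ⟨c, hc⟩ := hdvd (lam - i) i (by omega)
    have hb1 := myValAbs d hd i
    have hb2 := myValAbs dn hdn i
    rw [abs_lt] at hb1 hb2
    have hpos : (0:ℤ) < 2^(i+1) := by positivity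
    have hc1 : -2 < c := by nlinarith
    have hc2 : c < 2 := by nlinarith
    interval_cases c
    · right; right; rw [hc]; ring
    · left; rw [hc]; ring
    · right; left; rw [hc]; ring
  have main : ∀ i, i ≤ lam →
      ((val d i = val dn i → delta A dn i ≤ delta A d i + 1) ∧
       (val d i ≠ val dn i → dn i = 0 →
          delta A dn i ≤ delta A d i + 1 - A ∧ A ≤ delta A d i) ∧
       (val d i ≠ val dn i → dn i ≠ 0 → delta A dn i ≤ delta A d i + 1)) := by
    intro i
    induction i with
    | zero =>
      intro _
      refine ⟨fun _ => ?_, fun hne h0 => ?_, fun _ _ => ?_⟩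
      · rw [deltaZero, deltaZero]; linarith
      · exfalso
        have h1 : val d 0 = d 0 := by simp [val]
        have h2 : val dn 0 = dn 0 := by simp [val]
        have h := hcc 0 (Nat.zero_le lam)
        rw [h1, h2, h0] at h
        norm_num at h
        rcases h with h|h|h
        · exact hne (by rw [h1, h2, h0, h])
        · rcases hd 0 with h3|h3|h3 <;> omega
        · rcases hd 0 with h3|h3|h3 <;> omega
      · rw [deltaZero, deltaZero]; linarith
    | succ i ih =>
      intro hsucc
      have hi : i ≤ lam := by omega
      obtain ⟨IH0, IHB, IHC⟩ := ih hi
      have hci := hcc i hi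
      have hci' := hcc (i+1) hsucc
      have heq := hDs i
      have hpos : (0:ℤ) < 2^(i+1) := by positivity
      have hpow : ((2:ℤ)^(i+1+1)) = 2 * 2^(i+1) := by ring
      rw [hpow] at hci'
      have hZd : val d i ≠ val dn i → ¬ (∀ j < i+1, d j = 0) := by
        intro hne hall
        have h0 : val d i = 0 := myValAllZero d i hall
        have hb := myValAbs dn hdn i
        rw [abs_lt] at hb
        rcases hci with h|h|h
        · exact hne (by omega)
        · linarith
        · linarith
      have hZn : val d i ≠ val dn i → ¬ (∀ j < i+1, dn j = 0) := by
        intro hne hall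
        have h0 : val dn i = 0 := myValAllZero dn i hall
        have hb := myValAbs d hd i
        rw [abs_lt] at hb
        rcases hci with h|h|h
        · exact hne (by omega)
        · linarith
        · linarith
      have hIH1 : val d i ≠ val dn i → delta A dn i ≤ delta A d i + 1 := by
        intro hne
        by_cases h : dn i = 0
        · have := (IHB hne h).1; linarith
        · exact IHC hne h
      rcases hdn (i+1) with hf|hf|hf
      · -- f = -1
        have hfne : dn (i+1) ≠ 0 := by rw [hf]; norm_num
        have hdni : dn i = 0 := by
          have h5 := hnaf i
          rcases hdn i with h6|h6|h6 <;> rw [h6, hf] at h5 <;> first | exact h6 | norm_num at h5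
        rcases hd (i+1) with he|he|he
        · -- e = -1, f = -1
          rw [hf, he] at heq
          have hene : d (i+1) ≠ 0 := by rw [he]; norm_num
          have hE : val d i = val dn i := by
            rcases hci with h|h|h
            · linarith
            · exfalso; rcases hci' with h'|h'|h' <;> linarith
            · exfalso; rcases hci' with h'|h'|h' <;> linarith
          have key : delta A dn (i+1) ≤ delta A d (i+1) + 1 := by
            by_cases hall : ∀ j < i+1, dn j = 0
            · have halld : ∀ j < i+1, d j = 0 :=
                myValZero d hd i (by rw [hE]; exact myValAllZero dn i hall)
              rw [deltaSuccFirst A dn i hfne hall, deltaSuccFirst A d i hene halld]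
              linarith
            · have halld : ¬ ∀ j < i+1, d j = 0 := fun hh =>
                hall (myValZero dn hdn i (by rw [← hE]; exact myValAllZero d i hh))
              rw [deltaSuccMax A dn i hfne hall, deltaSuccMax A d i hene halld]
              have h8 := IH0 hE
              have h9 := le_max_left (delta A d i + (A-1)) A
              have h10 := le_max_right (delta A d i + (A-1)) A
              refine max_le (by linarith) (by linarith)
          exact ⟨fun _ => key, fun _ h0 => absurd h0 hfne, fun _ _ => key⟩
        · -- e = 0, f = -1
          rw [hf, he] at heq
          have hne : val d i ≠ val dn i := by
            intro hc
            have h7 : val d i - val dn i = 0 := by rw [hc]; ring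
            rcases hci' with h'|h'|h' <;> linarith
          have hB := IHB hne hdni
          have hdn2 : delta A dn (i+1) = max (delta A dn i + (A-1)) A :=
            deltaSuccMax A dn i hfne (hZn hne)
          have hd2 : delta A d (i+1) = delta A d i - 1 := deltaSuccZero A d i he
          have key : delta A dn (i+1) ≤ delta A d (i+1) + 1 := by
            rw [hdn2, hd2]
            refine max_le (by linarith [hB.1, hB.2]) (by linarith [hB.2])
          exact ⟨fun _ => key, fun _ h0 => absurd h0 hfne, fun _ _ => key⟩
        · -- e = 1, f = -1
          rw [hf, he] at heq
          have hene : d (i+1) ≠ 0 := by rw [he]; norm_num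
          have hE : val d i = val dn i := by
            rcases hci with h|h|h
            · linarith
            · exfalso; rcases hci' with h'|h'|h' <;> linarith
            · exfalso; rcases hci' with h'|h'|h' <;> linarith
          have key : delta A dn (i+1) ≤ delta A d (i+1) + 1 := by
            by_cases hall : ∀ j < i+1, dn j = 0
            · have halld : ∀ j < i+1, d j = 0 :=
                myValZero d hd i (by rw [hE]; exact myValAllZero dn i hall)
              rw [deltaSuccFirst A dn i hfne hall, deltaSuccFirst A d i hene halld]
              linarith
            · have halld : ¬ ∀ j < i+1, d j = 0 := fun hh =>
                hall (myValZero dn hdn i (by rw [← hE]; exact myValAllZero d i hh))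
              rw [deltaSuccMax A dn i hfne hall, deltaSuccMax A d i hene halld]
              have h8 := IH0 hE
              have h9 := le_max_left (delta A d i + (A-1)) A
              have h10 := le_max_right (delta A d i + (A-1)) A
              refine max_le (by linarith) (by linarith)
          exact ⟨fun _ => key, fun _ h0 => absurd h0 hfne, fun _ _ => key⟩
      · -- f = 0
        rcases hd (i+1) with he|he|he
        · -- e = -1, f = 0
          rw [hf, he] at heq
          have hene : d (i+1) ≠ 0 := by rw [he]; norm_num
          have hne : val d i ≠ val dn i := by
            intro hc
            have h7 : val d i - val dn i = 0 := by rw [hc]; ring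
            rcases hci' with h'|h'|h' <;> linarith
          have h1 := hIH1 hne
          have hdn2 : delta A dn (i+1) = delta A dn i - 1 := deltaSuccZero A dn i hf
          have hd2 : delta A d (i+1) = max (delta A d i + (A-1)) A :=
            deltaSuccMax A d i hene (hZd hne)
          have h9 := le_max_left (delta A d i + (A-1)) A
          have h10 := le_max_right (delta A d i + (A-1)) A
          refine ⟨fun _ => ?_, fun _ _ => ⟨?_, ?_⟩, fun _ hcon => absurd hf hcon⟩
          · rw [hdn2, hd2]; linarith
          · rw [hdn2, hd2]; linarith
          · rw [hd2]; linarith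
        · -- e = 0, f = 0
          rw [hf, he] at heq
          have hDi0 : val d i - val dn i = 0 := by
            rcases hci with h|h|h
            · exact h
            · exfalso; rcases hci' with h'|h'|h' <;> linarith
            · exfalso; rcases hci' with h'|h'|h' <;> linarith
          have hE : val d i = val dn i := by linarith
          have hE' : val d (i+1) = val dn (i+1) := by linarith
          have key : delta A dn (i+1) ≤ delta A d (i+1) + 1 := by
            rw [deltaSuccZero A dn i hf, deltaSuccZero A d i he]
            linarith [IH0 hE]
          exact ⟨fun _ => key, fun h' _ => absurd hE' h', fun _ hcon => absurd hf hcon⟩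
        · -- e = 1, f = 0
          rw [hf, he] at heq
          have hene : d (i+1) ≠ 0 := by rw [he]; norm_num
          have hne : val d i ≠ val dn i := by
            intro hc
            have h7 : val d i - val dn i = 0 := by rw [hc]; ring
            rcases hci' with h'|h'|h' <;> linarith
          have h1 := hIH1 hne
          have hdn2 : delta A dn (i+1) = delta A dn i - 1 := deltaSuccZero A dn i hf
          have hd2 : delta A d (i+1) = max (delta A d i + (A-1)) A :=
            deltaSuccMax A d i hene (hZd hne)
          have h9 := le_max_left (delta A d i + (A-1)) A
          have h10 := le_max_right (delta A d i + (A-1)) A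
          refine ⟨fun _ => ?_, fun _ _ => ⟨?_, ?_⟩, fun _ hcon => absurd hf hcon⟩
          · rw [hdn2, hd2]; linarith
          · rw [hdn2, hd2]; linarith
          · rw [hd2]; linarith
      · -- f = 1
        have hfne : dn (i+1) ≠ 0 := by rw [hf]; norm_num
        have hdni : dn i = 0 := by
          have h5 := hnaf i
          rcases hdn i with h6|h6|h6 <;> rw [h6, hf] at h5 <;> first | exact h6 | norm_num at h5
        rcases hd (i+1) with he|he|he
        · -- e = -1, f = 1
          rw [hf, he] at heq
          have hene : d (i+1) ≠ 0 := by rw [he]; norm_num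
          have hE : val d i = val dn i := by
            rcases hci with h|h|h
            · linarith
            · exfalso; rcases hci' with h'|h'|h' <;> linarith
            · exfalso; rcases hci' with h'|h'|h' <;> linarith
          have key : delta A dn (i+1) ≤ delta A d (i+1) + 1 := by
            by_cases hall : ∀ j < i+1, dn j = 0
            · have halld : ∀ j < i+1, d j = 0 :=
                myValZero d hd i (by rw [hE]; exact myValAllZero dn i hall)
              rw [deltaSuccFirst A dn i hfne hall, deltaSuccFirst A d i hene halld]
              linarith
            · have halld : ¬ ∀ j < i+1, d j = 0 := fun hh =>
                hall (myValZero dn hdn i (by rw [← hE]; exact myValAllZero d i hh))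
              rw [deltaSuccMax A dn i hfne hall, deltaSuccMax A d i hene halld]
              have h8 := IH0 hE
              have h9 := le_max_left (delta A d i + (A-1)) A
              have h10 := le_max_right (delta A d i + (A-1)) A
              refine max_le (by linarith) (by linarith)
          exact ⟨fun _ => key, fun _ h0 => absurd h0 hfne, fun _ _ => key⟩
        · -- e = 0, f = 1
          rw [hf, he] at heq
          have hne : val d i ≠ val dn i := by
            intro hc
            have h7 : val d i - val dn i = 0 := by rw [hc]; ring
            rcases hci' with h'|h'|h' <;> linarith
          have hB := IHB hne hdni
          have hdn2 : delta A dn (i+1) = max (delta A dn i + (A-1)) A :=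
            deltaSuccMax A dn i hfne (hZn hne)
          have hd2 : delta A d (i+1) = delta A d i - 1 := deltaSuccZero A d i he
          have key : delta A dn (i+1) ≤ delta A d (i+1) + 1 := by
            rw [hdn2, hd2]
            refine max_le (by linarith [hB.1, hB.2]) (by linarith [hB.2])
          exact ⟨fun _ => key, fun _ h0 => absurd h0 hfne, fun _ _ => key⟩
        · -- e = 1, f = 1
          rw [hf, he] at heq
          have hene : d (i+1) ≠ 0 := by rw [he]; norm_num
          have hE : val d i = val dn i := by
            rcases hci with h|h|h
            · linarith
            · exfalso; rcases hci' with h'|h'|h' <;> linarith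
            · exfalso; rcases hci' with h'|h'|h' <;> linarith
          have key : delta A dn (i+1) ≤ delta A d (i+1) + 1 := by
            by_cases hall : ∀ j < i+1, dn j = 0
            · have halld : ∀ j < i+1, d j = 0 :=
                myValZero d hd i (by rw [hE]; exact myValAllZero dn i hall)
              rw [deltaSuccFirst A dn i hfne hall, deltaSuccFirst A d i hene halld]
              linarith
            · have halld : ¬ ∀ j < i+1, d j = 0 := fun hh =>
                hall (myValZero dn hdn i (by rw [← hE]; exact myValAllZero d i hh))
              rw [deltaSuccMax A dn i hfne hall, deltaSuccMax A d i hene halld]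
              have h8 := IH0 hE
              have h9 := le_max_left (delta A d i + (A-1)) A
              have h10 := le_max_right (delta A d i + (A-1)) A
              refine max_le (by linarith) (by linarith)
          exact ⟨fun _ => key, fun _ h0 => absurd h0 hfne, fun _ _ => key⟩
  have hE : val d lam = val dn lam := by rw [hdval, hdnval]
  exact (main lam le_rfl).1 hE
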